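/- The HOP function is differentiable on ℝ and its proximity displacement admits the closed form: for all x ∈ ℝ, x − l_{p,c}'(x) = max{0, |x| − c^{2−p}·|x|^{p−1}}·sign(x) (the right-hand side interpreted as 0 at x = 0); in particular this expression vanishes exactly when |x| ≤ c. -/

import Mathlib

/-- The hybrid ordinary-ℓp (HOP) function with parameters `0 < p ≤ 1`, `c > 0`. -/
noncomputable def hop (p c x : ℝ) : ℝ :=
  if |x| ≤ c then x ^ 2 / 2
  else (1 / p) * c ^ ((2 : ℝ) - p) * |x| ^ p + c ^ 2 / 2 - c ^ 2 / p

/-- The derivative of the HOP function. -/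
noncomputable def hopD (p c x : ℝ) : ℝ :=
  if |x| ≤ c then x else c ^ ((2 : ℝ) - p) * |x| ^ (p - 1) * Real.sign x

lemma hop_even (p c x : ℝ) : hop p c (-x) = hop p c x := by
  simp [hop, abs_neg, neg_sq]

lemma hopD_odd (p c x : ℝ) : hopD p c (-x) = -hopD p c x := by
  simp only [hopD, abs_neg, Real.sign_neg]
  split <;> ring

lemma sq_half_deriv (x : ℝ) : HasDerivAt (fun y : ℝ => y ^ 2 / 2) x x := by
  simpa using (hasDerivAt_pow 2 x).div_const 2

/-- Derivative of the outer branch at positive points. -/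
lemma outer_deriv (p c : ℝ) (hp : 0 < p) (x : ℝ) (hx : 0 < x) :
    HasDerivAt (fun y : ℝ => (1 / p) * c ^ ((2 : ℝ) - p) * y ^ p + c ^ 2 / 2 - c ^ 2 / p)
      ((1 / p) * c ^ ((2 : ℝ) - p) * (p * x ^ (p - 1))) x := by
  exact (((Real.hasDerivAt_rpow_const (Or.inl hx.ne')).const_mul
    ((1 / p) * c ^ ((2 : ℝ) - p))).add_const (c ^ 2 / 2)).sub_const (c ^ 2 / p)

lemma hasDerivAt_hop (p c : ℝ) (hp : 0 < p) (hp1 : p ≤ 1) (hc : 0 < c) (x : ℝ) :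
    HasDerivAt (hop p c) (hopD p c x) x := by
  have hc2 : c ^ ((2 : ℝ) - p) * c ^ p = c ^ 2 := by
    rw [← Real.rpow_add hc]
    norm_num
  suffices h : ∀ x : ℝ, 0 ≤ x → HasDerivAt (hop p c) (hopD p c x) x by
    rcases le_or_gt 0 x with hx | hx
    · exact h x hx
    · have h1 := (h (-x) (by linarith)).comp x (hasDerivAt_neg x)
      have h2 : (hop p c) ∘ (fun y => -y) = hop p c := by
        funext y; exact hop_even p c y
      rw [h2, hopD_odd] at h1
      simpa using h1
  intro x hx
  rcases lt_trichotomy x c with hlt | heq | hgt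
  · -- interior of the quadratic region
    have hD : hopD p c x = x := by
      rw [hopD, if_pos (by rw [abs_of_nonneg hx]; exact hlt.le)]
    rw [hD]
    apply (sq_half_deriv x).congr_of_eventuallyEq
    have hmem : {y : ℝ | |y| < c} ∈ nhds x := by
      exact (isOpen_lt continuous_abs continuous_const).mem_nhds
        (by simp [abs_of_nonneg hx, hlt])
    filter_upwards [hmem] with y hy
    rw [hop, if_pos (le_of_lt hy)]
  · -- boundary point x = c
    rw [heq]
    clear hx heq x
    have habs : |c| = c := abs_of_pos hc
    have hD : hopD p c c = c := by rw [hopD, habs, if_pos le_rfl]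
    rw [hD]
    -- left part: quadratic
    have hleft : HasDerivWithinAt (hop p c) c (Set.Iic c) c := by
      apply ((sq_half_deriv c).hasDerivWithinAt).congr_of_eventuallyEq
      · have hmem : Set.Ioi (-c) ∈ nhdsWithin c (Set.Iic c) :=
          mem_nhdsWithin_of_mem_nhds (isOpen_Ioi.mem_nhds (Set.mem_Ioi.mpr (by linarith)))
        filter_upwards [hmem, self_mem_nhdsWithin] with y hy1 hy2
        rw [hop, if_pos (abs_le.mpr ⟨by simpa using hy1.le, hy2⟩)]
      · rw [hop, habs, if_pos le_rfl]
    -- right part: outer branch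
    have hval : (1 / p) * c ^ ((2 : ℝ) - p) * (p * c ^ (p - 1)) = c := by
      have h1 : c ^ ((2 : ℝ) - p) * c ^ (p - 1) = c := by
        rw [← Real.rpow_add hc]; norm_num
      field_simp
      exact h1
    have hbd : (1 / p) * c ^ ((2 : ℝ) - p) * c ^ p + c ^ 2 / 2 - c ^ 2 / p
        = c ^ 2 / 2 := by
      have h1 : (1 / p) * (c ^ ((2 : ℝ) - p) * c ^ p) = c ^ 2 / p := by
        rw [hc2]; ring
      nlinarith [h1]
    have hright : HasDerivWithinAt (hop p c) c (Set.Ici c) c := by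
      have hout := outer_deriv p c hp c hc
      rw [hval] at hout
      apply (hout.hasDerivWithinAt).congr_of_eventuallyEq
      · filter_upwards [self_mem_nhdsWithin] with y hy
        rcases eq_or_lt_of_le (Set.mem_Ici.mp hy) with h | h
        · rw [hop, ← h, habs, if_pos le_rfl, ← h] at *
          rw [habs]
          linarith [hbd]
        · have hyabs : |y| = y := abs_of_nonneg (by linarith)
          rw [hop, if_neg (by rw [hyabs]; exact not_le.mpr h), hyabs]
      · rw [hop, habs, if_pos le_rfl]
        linarith [hbd]
    have hu := hleft.union hright
    rw [Set.Iic_union_Ici] at hu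
    exact hasDerivWithinAt_univ.mp hu
  · -- outer region x > c
    have hxpos : 0 < x := hc.trans hgt
    have habs : |x| = x := abs_of_nonneg hx
    have hD : hopD p c x = (1 / p) * c ^ ((2 : ℝ) - p) * (p * x ^ (p - 1)) := by
      rw [hopD, if_neg (by rw [habs]; exact not_le.mpr hgt), habs,
        Real.sign_of_pos hxpos]
      field_simp
    rw [hD]
    apply (outer_deriv p c hp x hxpos).congr_of_eventuallyEq
    have hmem : {y : ℝ | c < y} ∈ nhds x := isOpen_Ioi.mem_nhds hgt
    filter_upwards [hmem] with y hy
    have hyabs : |y| = y := abs_of_nonneg (le_of_lt (hc.trans hy))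
    rw [hop, if_neg (by rw [hyabs]; exact not_le.mpr hy), hyabs]

/-- Factorization of the displacement magnitude. -/
lemma disp_factor (p c x : ℝ) (hx : 0 < |x|) :
    |x| - c ^ ((2 : ℝ) - p) * |x| ^ (p - 1)
      = (|x| ^ ((2 : ℝ) - p) - c ^ ((2 : ℝ) - p)) * |x| ^ (p - 1) := by
  rw [sub_mul, ← Real.rpow_add hx]
  norm_num

/-- The HOP function is differentiable on ℝ, its proximity
displacement `x − l'(x)` equals `max{0, |x| − c^{2−p}·|x|^{p−1}}·sign(x)`
(the right-hand side being 0 at `x = 0` since `sign 0 = 0`),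
and this expression vanishes exactly when `|x| ≤ c`. -/
theorem hop_differentiable_prox (p c : ℝ) (hp : 0 < p) (hp1 : p ≤ 1) (hc : 0 < c) :
    (∀ x : ℝ, DifferentiableAt ℝ (hop p c) x) ∧
    (∀ x : ℝ, x - deriv (hop p c) x =
      max 0 (|x| - c ^ ((2 : ℝ) - p) * |x| ^ (p - 1)) * Real.sign x) ∧
    (∀ x : ℝ,
      max 0 (|x| - c ^ ((2 : ℝ) - p) * |x| ^ (p - 1)) * Real.sign x = 0 ↔
      |x| ≤ c) := by
  have hkey := hasDerivAt_hop p c hp hp1 hc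
  have hderiv : ∀ x : ℝ, deriv (hop p c) x = hopD p c x := fun x => (hkey x).deriv
  have h2p : (0 : ℝ) < 2 - p := by linarith
  -- sign of the displacement magnitude
  have hneg : ∀ x : ℝ, 0 < |x| → |x| ≤ c →
      |x| - c ^ ((2 : ℝ) - p) * |x| ^ (p - 1) ≤ 0 := by
    intro x hx hxc
    rw [disp_factor p c x hx]
    have h1 : |x| ^ ((2 : ℝ) - p) ≤ c ^ ((2 : ℝ) - p) :=
      Real.rpow_le_rpow (abs_nonneg x) hxc h2p.le
    have h2 : (0 : ℝ) < |x| ^ (p - 1) := Real.rpow_pos_of_pos hx _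
    nlinarith
  have hpos : ∀ x : ℝ, c < |x| →
      0 < |x| - c ^ ((2 : ℝ) - p) * |x| ^ (p - 1) := by
    intro x hxc
    have hx : 0 < |x| := hc.trans hxc
    rw [disp_factor p c x hx]
    have h1 : c ^ ((2 : ℝ) - p) < |x| ^ ((2 : ℝ) - p) :=
      Real.rpow_lt_rpow hc.le hxc h2p
    have h2 : (0 : ℝ) < |x| ^ (p - 1) := Real.rpow_pos_of_pos hx _
    nlinarith
  refine ⟨fun x => (hkey x).differentiableAt, fun x => ?_, fun x => ?_⟩
  · rw [hderiv x, hopD]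
    rcases le_or_gt (|x|) c with hxc | hxc
    · rw [if_pos hxc]
      rcases eq_or_ne x 0 with rfl | hx0
      · simp
      · have hx : 0 < |x| := abs_pos.mpr hx0
        rw [max_eq_left (hneg x hx hxc)]
        ring
    · rw [if_neg (not_le.mpr hxc), max_eq_right (hpos x hxc).le]
      have hx0 : x ≠ 0 := fun h => by simp [h] at hxc; linarith
      rcases hx0.lt_or_gt with h | h
      · rw [Real.sign_of_neg h, abs_of_neg h]; ring
      · rw [Real.sign_of_pos h, abs_of_pos h]; ring
  · constructor
    · intro h
      by_contra hxc
      push_neg at hxc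
      have hx0 : x ≠ 0 := fun h0 => by simp [h0] at hxc; linarith
      have hm : max 0 (|x| - c ^ ((2 : ℝ) - p) * |x| ^ (p - 1)) ≠ 0 := by
        rw [max_eq_right (hpos x hxc).le]
        exact (hpos x hxc).ne'
      have hs : Real.sign x ≠ 0 := fun hs => hx0 (Real.sign_eq_zero_iff.mp hs)
      exact (mul_ne_zero hm hs) h
    · intro hxc
      rcases eq_or_ne x 0 with rfl | hx0
      · simp
      · rw [max_eq_left (hneg x (abs_pos.mpr hx0) hxc), zero_mul]
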